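/- For s ∈ ℝ with 2s ∉ ℤ, define θ_i^{(s)} = (1/i!)·∏_{k=0}^{i-1}(s-k)/(2s-k) for i ≥ 1 and θ_0^{(s)} = 1, and define for positive integers i ≤ j with i ≡ j (mod 2): ν_{2i,2j}^{(s)} = 2√(4i-1) · [(s+1/2-j)_i (-j)_i / ((j-s)_i (1/2+j)_i)] · θ_{2j}^{(s)} and ν_{2i-1,2j-1}^{(s)} = 2√(4i-3) · [(s+3/2-j)_{i-1} (1-j)_{i-1} / ((j-s)_{i-1} (1/2+j)_{i-1})] · θ_{2j-1}^{(s)}. Then for all positive integers i, p, q: ν_{2i-1,2p-1}^{(s)} ν_{2i-1,2q+1}^{(s)} + ν_{2i,2p}^{(s)} ν_{2i,2q}^{(s)} = 2 θ_{2p-1}^{(s)} θ_{2q}^{(s)} φ̃_{i-1}(s;p,q), where φ̃_n(s;p,q) = φ_n(s;p,q)·[(4n+3)(1+s-2p)(q-n)(1+2s+2n-2q) + (4n+1)(s-2q)(1+2p+2n)(s-p-n)]/[(s-p)(1+2p)(s-q)(1+2q)] and φ_n(s;p,q) = (s+3/2-p)_n(1-p)_n(s+1/2-q)_n(-q)_n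 / [(p-s+1)_n(p+3/2)_n(q-s+1)_n(q+3/2)_n]. -/

import Mathlib

/-- The rising factorial (Pochhammer symbol) `(x)_n = x (x+1) ⋯ (x+n-1)`. -/
noncomputable def risingFactorial (x : ℝ) (n : ℕ) : ℝ :=
  ∏ k ∈ Finset.range n, (x + k)

/-- `φ_n(s;p,q)`. -/
noncomputable def varphi (s : ℝ) (p q : ℕ) (n : ℕ) : ℝ :=
  (risingFactorial (s + 3 / 2 - p) n * risingFactorial (1 - p) n *
      risingFactorial (s + 1 / 2 - q) n * risingFactorial (-q) n) /
    (risingFactorial ((p : ℝ) - s + 1) n * risingFactorial ((p : ℝ) + 3 / 2) n *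
      risingFactorial ((q : ℝ) - s + 1) n * risingFactorial ((q : ℝ) + 3 / 2) n)

/-- `Φ_n(s;p,q)`. -/
noncomputable def Phi (s : ℝ) (p q : ℕ) (n : ℕ) : ℝ :=
  (((n : ℝ) + p - s) * (1 + 2 * p + 2 * n) * ((n : ℝ) + q - s) * (1 + 2 * q + 2 * n) /
      ((s - p) * (1 + 2 * p) * (s - q) * (1 + 2 * q))) * varphi s p q n

/-- `φ̃_n(s;p,q)` (denoted `ϕ_n` in the paper). -/
noncomputable def phiT (s : ℝ) (p q : ℕ) (n : ℕ) : ℝ :=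
  varphi s p q n *
    ((4 * (n : ℝ) + 3) * (1 + s - 2 * p) * ((q : ℝ) - n) * (1 + 2 * s + 2 * n - 2 * q) +
      (4 * (n : ℝ) + 1) * (s - 2 * q) * (1 + 2 * p + 2 * n) * (s - p - n)) /
    ((s - p) * (1 + 2 * p) * (s - q) * (1 + 2 * q))

/-- `θ_i^{(s)} = (1/i!) ∏_{k=0}^{i-1} (s-k)/(2s-k)`, with `θ_0^{(s)} = 1`. -/
noncomputable def theta (s : ℝ) (i : ℕ) : ℝ :=
  (1 / (Nat.factorial i : ℝ)) * ∏ k ∈ Finset.range i, (s - k) / (2 * s - k)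

/-- `ν_{2i,2j}^{(s)} = 2√(4i-1) (s+1/2-j)_i (-j)_i / ((j-s)_i (1/2+j)_i) θ_{2j}^{(s)}`. -/
noncomputable def nuEven (s : ℝ) (i j : ℕ) : ℝ :=
  2 * Real.sqrt (4 * (i : ℝ) - 1) *
    (risingFactorial (s + 1 / 2 - j) i * risingFactorial (-(j : ℝ)) i /
      (risingFactorial ((j : ℝ) - s) i * risingFactorial (1 / 2 + j) i)) *
    theta s (2 * j)

/-- `ν_{2i-1,2j-1}^{(s)} = 2√(4i-3) (s+3/2-j)_{i-1} (1-j)_{i-1} / ((j-s)_{i-1} (1/2+j)_{i-1}) θ_{2j-1}^{(s)}`. -/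
noncomputable def nuOdd (s : ℝ) (i j : ℕ) : ℝ :=
  2 * Real.sqrt (4 * (i : ℝ) - 3) *
    (risingFactorial (s + 3 / 2 - j) (i - 1) * risingFactorial (1 - (j : ℝ)) (i - 1) /
      (risingFactorial ((j : ℝ) - s) (i - 1) * risingFactorial (1 / 2 + j) (i - 1))) *
    theta s (2 * j - 1)

lemma rf_succ (x : ℝ) (n : ℕ) :
    risingFactorial x (n+1) = risingFactorial x n * (x + n) := by
  simp [risingFactorial, Finset.prod_range_succ]

lemma rf_succ' (x : ℝ) (n : ℕ) :
    risingFactorial x (n+1) = x * risingFactorial (x+1) n := by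
  rw [risingFactorial, Finset.prod_range_succ', mul_comm]
  congr 1
  · simp
  · apply Finset.prod_congr rfl
    intros k _
    push_cast
    ring

lemma rf_shift (x : ℝ) (n : ℕ) (h : x + n ≠ 0) :
    risingFactorial x n = x * risingFactorial (x+1) n / (x + n) := by
  rw [eq_div_iff h, ← rf_succ, rf_succ']

lemma rf_congr {x y : ℝ} (n : ℕ) (h : x = y) :
    risingFactorial x n = risingFactorial y n := by rw [h]

lemma rf_ne_zero {x : ℝ} {n : ℕ} (h : ∀ k ∈ Finset.range n, x + (k:ℝ) ≠ 0) :
    risingFactorial x n ≠ 0 :=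
  Finset.prod_ne_zero_iff.mpr h

lemma theta_succ (s : ℝ) (m : ℕ) (h : 2*s - (m:ℝ) ≠ 0) :
    theta s (m+1) = theta s m * ((s - m) / (((m:ℝ)+1) * (2*s - m))) := by
  have hf : (Nat.factorial m : ℝ) ≠ 0 := Nat.cast_ne_zero.mpr (Nat.factorial_ne_zero m)
  have hm : ((m:ℝ)+1) ≠ 0 := by positivity
  rw [theta, theta, Finset.prod_range_succ, Nat.factorial_succ]
  push_cast
  field_simp

lemma key (a x y u v : ℝ) : (2*a*x*u) * (2*a*y*v) = (a*a) * (4*(x*y)*(u*v)) := by ring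


set_option maxHeartbeats 2000000 in
set_option maxRecDepth 100000 in
/-- Lemma 5.6: `ν_{2i-1,2p-1} ν_{2i-1,2q+1} + ν_{2i,2p} ν_{2i,2q} = 2 θ_{2p-1} θ_{2q} φ̃_{i-1}(s;p,q)`. -/
theorem nu_product_identity (s : ℝ) (hs : ∀ m : ℤ, 2 * s ≠ (m : ℝ))
    (i p q : ℕ) (hi : 0 < i) (hp : 0 < p) (hq : 0 < q) :
    nuOdd s i p * nuOdd s i (q + 1) + nuEven s i p * nuEven s i q =
      2 * theta s (2 * p - 1) * theta s (2 * q) * phiT s p q (i - 1) := by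
  have hsZ : ∀ m : ℤ, s ≠ (m : ℝ) := by
    intro m h
    exact hs (2*m) (by push_cast [h]; ring)
  obtain ⟨n, rfl⟩ : ∃ n, i = n + 1 := ⟨i-1, by omega⟩
  obtain ⟨P, rfl⟩ : ∃ P, p = P + 1 := ⟨p-1, by omega⟩
  obtain ⟨Q, rfl⟩ : ∃ Q, q = Q + 1 := ⟨q-1, by omega⟩
  have h1 : 2*s - ((2*Q+2 : ℕ):ℝ) ≠ 0 := by
    intro h; exact hs (2*Q+2) (by push_cast at h ⊢; linarith)
  have h2 : 2*s - ((2*P+1 : ℕ):ℝ) ≠ 0 := by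
    intro h; exact hs (2*P+1) (by push_cast at h ⊢; linarith)
  have hd1 : ((P:ℝ)+1-s) + (n:ℝ) ≠ 0 := by
    intro h; exact hsZ ((P:ℤ)+1+(n:ℤ)) (by push_cast; linarith)
  have hd2 : (1/2 + ((P:ℝ)+1)) + (n:ℝ) ≠ 0 := by positivity
  have hD1 : risingFactorial ((P:ℝ)+1-s+1) n ≠ 0 := by
    refine rf_ne_zero fun k _ h => hsZ ((P:ℤ)+2+(k:ℤ)) (by push_cast; linarith)
  have hD2 : risingFactorial ((P:ℝ)+1+3/2) n ≠ 0 := by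
    refine rf_ne_zero fun k _ => by positivity
  have hD3 : risingFactorial ((Q:ℝ)+1-s+1) n ≠ 0 := by
    refine rf_ne_zero fun k _ h => hsZ ((Q:ℤ)+2+(k:ℤ)) (by push_cast; linarith)
  have hD4 : risingFactorial ((Q:ℝ)+1+3/2) n ≠ 0 := by
    refine rf_ne_zero fun k _ => by positivity
  have hsp : s - ((P:ℝ)+1) ≠ 0 := by
    intro h; exact hsZ ((P:ℤ)+1) (by push_cast; linarith)
  have hsq : s - ((Q:ℝ)+1) ≠ 0 := by
    intro h; exact hsZ ((Q:ℤ)+1) (by push_cast; linarith)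
  have h2p : 1+2*((P:ℝ)+1) ≠ 0 := by positivity
  have h2q : 1+2*((Q:ℝ)+1) ≠ 0 := by positivity
  have h1' : 2*s - (2*(Q:ℝ)+2) ≠ 0 := by intro h; apply h1; push_cast; linarith
  have h2' : 2*s - (2*(P:ℝ)+1) ≠ 0 := by intro h; apply h2; push_cast; linarith
  have hq3 : (2*(Q:ℝ)+2+1) ≠ 0 := by positivity
  have hp2 : (2*(P:ℝ)+1+1) ≠ 0 := by positivity
  simp only [nuOdd, nuEven, phiT, varphi, Nat.add_sub_cancel]
  rw [show 2*(P+1)-1 = 2*P+1 from by omega, show 2*(Q+1+1)-1 = (2*Q+2)+1 from by omega,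
    show 2*(P+1) = (2*P+1)+1 from by omega, show 2*(Q+1) = 2*Q+2 from by omega,
    theta_succ s (2*Q+2) h1, theta_succ s (2*P+1) h2]
  rw [key, key]
  rw [Real.mul_self_sqrt (by push_cast; linarith [Nat.cast_nonneg (α := ℝ) n] : (0:ℝ) ≤ 4 * ((n+1:ℕ):ℝ) - 3),
      Real.mul_self_sqrt (by push_cast; linarith [Nat.cast_nonneg (α := ℝ) n] : (0:ℝ) ≤ 4 * ((n+1:ℕ):ℝ) - 1)]
  push_cast
  rw [rf_shift ((P:ℝ)+1-s) n hd1,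
      rf_shift (1/2+((P:ℝ)+1)) n hd2,
      rf_congr n (show (1/2+((P:ℝ)+1)+1) = ((P:ℝ)+1+3/2) from by ring),
      rf_congr n (show s+3/2-((Q:ℝ)+1+1) = s+1/2-((Q:ℝ)+1) from by ring),
      rf_congr n (show 1-((Q:ℝ)+1+1) = -((Q:ℝ)+1) from by ring),
      rf_congr n (show ((Q:ℝ)+1+1) - s = (Q:ℝ)+1-s+1 from by ring),
      rf_congr n (show 1/2+((Q:ℝ)+1+1) = (Q:ℝ)+1+3/2 from by ring),
      rf_succ' (s+1/2-((P:ℝ)+1)) n,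
      rf_congr n (show s+1/2-((P:ℝ)+1)+1 = s+3/2-((P:ℝ)+1) from by ring),
      rf_succ' (-((P:ℝ)+1)) n,
      rf_congr n (show -((P:ℝ)+1)+1 = 1-((P:ℝ)+1) from by ring),
      rf_succ' ((P:ℝ)+1-s) n,
      rf_succ' (1/2+((P:ℝ)+1)) n,
      rf_congr n (show (1/2+((P:ℝ)+1)+1) = ((P:ℝ)+1+3/2) from by ring),
      rf_succ (s+1/2-((Q:ℝ)+1)) n,
      rf_succ (-((Q:ℝ)+1)) n,
      rf_succ' ((Q:ℝ)+1-s) n,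
      rf_succ' (1/2+((Q:ℝ)+1)) n,
      rf_congr n (show 1/2+((Q:ℝ)+1)+1 = (Q:ℝ)+1+3/2 from by ring)]
  have hps : ((P:ℝ)+1-s) ≠ 0 := fun h => hsp (by linarith)
  have hqs : ((Q:ℝ)+1-s) ≠ 0 := fun h => hsq (by linarith)
  have hhp : (1/2+((P:ℝ)+1)) ≠ 0 := by positivity
  have hhq : (1/2+((Q:ℝ)+1)) ≠ 0 := by positivity
  generalize risingFactorial (s + 3/2 - ((P:ℝ)+1)) n = R1
  generalize risingFactorial (1 - ((P:ℝ)+1)) n = R2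
  generalize risingFactorial (s + 1/2 - ((Q:ℝ)+1)) n = R3
  generalize risingFactorial (-((Q:ℝ)+1)) n = R4
  generalize hT1 : theta s (2*P+1) = T1
  generalize hT2 : theta s (2*Q+2) = T2
  generalize hE1 : risingFactorial ((P:ℝ)+1-s+1) n = D1 at hD1 ⊢
  generalize hE2 : risingFactorial ((P:ℝ)+1+3/2) n = D2 at hD2 ⊢
  generalize hE3 : risingFactorial ((Q:ℝ)+1-s+1) n = D3 at hD3 ⊢
  generalize hE4 : risingFactorial ((Q:ℝ)+1+3/2) n = D4 at hD4 ⊢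
  have h2'' : s*2 - ((P:ℝ)*2+1) ≠ 0 := by intro h; apply h2'; linarith
  field_simp
  ring
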